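/- Fix integers n ≥ 2 and r−1 ≥ 1, and a partition μ = (μ_1 ≥ … ≥ μ_n ≥ 0). Let ℤ^n_μ = {λ ∈ ℤ^n : λ^{quot} = μ}. For λ ∈ ℤ^n with index ordering i_1,…,i_n and quotient data p_1,…,p_n, define λ' ∈ ℤ^n by λ'_{i_m} = λ_{i_m} − σ(λ)_{i_m}·(r−1)·(p_m + p_{m+1} + ⋯ + p_n) for 1 ≤ m ≤ n. Then ρ(λ') = ρ(λ), σ(λ') = σ(λ), λ'_i ≡ λ_i (mod r−1) for all i, the (r−1)-quotient of λ' is (0, …, 0), and the map λ ↦ λ' is a bijection from ℤ^n_μ onto ℤ^n_{(0,…,0)}. -/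

import Mathlib

open scoped Classical

namespace CCnDAHA

variable {n : ℕ}




/-- σ(λ)_i = +1 if λ_i ≥ 0, −1 otherwise. -/
def sgn (lam : Fin n → ℤ) (i : Fin n) : ℤ := if 0 ≤ lam i then 1 else -1

/-- `Prec lam i j` : index `i` strictly precedes `j` in the ordering i_1,…,i_n. -/
def Prec (lam : Fin n → ℤ) (i j : Fin n) : Prop :=
  |lam j| < |lam i| ∨
    (|lam i| = |lam j| ∧
      ((0 ≤ lam i ∧ lam j < 0) ∨
       (0 ≤ lam i ∧ 0 ≤ lam j ∧ i < j) ∨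
       (lam i < 0 ∧ lam j < 0 ∧ j < i)))

/-- 0-based position of index `i` in the ordering i_1,…,i_n (position m−1). -/
noncomputable def posOf (lam : Fin n → ℤ) (i : Fin n) : ℕ :=
  (Finset.univ.filter (fun j => Prec lam j i)).card

/-- ρ(λ)_i = σ(λ)_i · (n − m) where i = i_m. -/
noncomputable def rho (lam : Fin n → ℤ) (i : Fin n) : ℤ :=
  sgn lam i * ((n : ℤ) - 1 - (posOf lam i : ℤ))

/-- (a,b)-neighborhood. -/
noncomputable def IsNbhd (a b : ℤ) (lam : Fin n → ℤ) (i j : Fin n) : Prop :=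
  |rho lam i| - |rho lam j| = a - 1 ∧
  |lam i| - |lam j| ≤ b ∧
  (|lam i| - |lam j| = b →
    ((0 ≤ lam i ∧ 0 ≤ lam j ∧ j < i) ∨
     (lam i < 0 ∧ lam j < 0 ∧ i < j) ∨
     (lam i < 0 ∧ 0 ≤ lam j)))

/-- (a,b)-admissible: no (a,b)-neighborhood. -/
noncomputable def Admissible (a b : ℤ) (lam : Fin n → ℤ) : Prop :=
  ∀ i j, ¬ IsNbhd a b lam i j

/-- number of (a,b)-neighborhoods. -/
noncomputable def nbhdCount (a b : ℤ) (lam : Fin n → ℤ) : ℕ :=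
  ((Finset.univ : Finset (Fin n × Fin n)).filter (fun p => IsNbhd a b lam p.1 p.2)).card

/-- dot action of the affine simple reflection s_i (0 ≤ i ≤ n, 1-based paper indexing). -/
noncomputable def dotAct (i : ℕ) (lam : Fin n → ℤ) : Fin n → ℤ := fun j =>
  if i = 0 then (if (j : ℕ) = 0 then -1 - lam j else lam j)
  else if i = n then (if (j : ℕ) + 1 = n then -lam j else lam j)
  else if h1 : (j : ℕ) + 1 = i ∧ i < n then lam ⟨(j : ℕ) + 1, by omega⟩
  else if h2 : (j : ℕ) = i then lam ⟨(j : ℕ) - 1, by have := j.isLt; omega⟩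
  else lam j

/-- pairing ⟨λ, α_i⟩, for 0 ≤ i ≤ n. -/
noncomputable def pairing (i : ℕ) (lam : Fin n → ℤ) : ℤ :=
  if hn : n = 0 then 0
  else if i = 0 then -2 * lam ⟨0, by omega⟩
  else if i = n then 2 * lam ⟨n - 1, by omega⟩
  else lam ⟨(i - 1) % n, Nat.mod_lt _ (by omega)⟩ - lam ⟨i % n, Nat.mod_lt _ (by omega)⟩

/-- partial sum λ_1 + ⋯ + λ_j. -/
def psum (lam : Fin n → ℤ) (j : Fin n) : ℤ :=
  ∑ i ∈ Finset.univ.filter (fun i => i ≤ j), lam i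

/-- dominance order: μ ≤ λ. -/
def DomLE (mu lam : Fin n → ℤ) : Prop := ∀ j, psum mu j ≤ psum lam j

/-- λ⁺ : the weakly decreasing rearrangement of (|λ_1|,…,|λ_n|). -/
noncomputable def lamPlus (lam : Fin n → ℤ) : Fin n → ℤ := fun j =>
  ((Multiset.sort (Multiset.map (fun i => |lam i|) Finset.univ.val) (· ≤ ·)).reverse).getD (j : ℕ) 0

/-- λ ≻ μ. -/
noncomputable def SuccOrd (lam mu : Fin n → ℤ) : Prop :=
  (DomLE (lamPlus mu) (lamPlus lam) ∧ lamPlus lam ≠ lamPlus mu) ∨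
  (lamPlus lam = lamPlus mu ∧ DomLE mu lam ∧ lam ≠ mu)

/-- |λ_{i_m}|, with the sentinel value 0 at m = n+1. -/
noncomputable def absAt (lam : Fin n → ℤ) (m : ℕ) : ℤ :=
  if m = n + 1 then 0
  else ∑ i ∈ Finset.univ.filter (fun i => posOf lam i + 1 = m), |lam i|

/-- σ(λ)_{i_m}, with sentinel value +1 at m = n+1. -/
noncomputable def sgAt (lam : Fin n → ℤ) (m : ℕ) : ℤ :=
  if m = n + 1 then 1
  else ∑ i ∈ Finset.univ.filter (fun i => posOf lam i + 1 = m), sgn lam i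

/-- the (1-based) value of the index i_m, with sentinel value n+1 at m = n+1. -/
noncomputable def ixAt (lam : Fin n → ℤ) (m : ℕ) : ℕ :=
  if m = n + 1 then n + 1
  else ∑ i ∈ Finset.univ.filter (fun i => posOf lam i + 1 = m), ((i : ℕ) + 1)

/-- β_m ∈ {0,1}. -/
noncomputable def betaAt (lam : Fin n → ℤ) (m : ℕ) : ℤ :=
  if (sgAt lam m = 1 ∧ sgAt lam (m + 1) = 1 ∧ ixAt lam (m + 1) < ixAt lam m) ∨
     (sgAt lam m = -1 ∧ sgAt lam (m + 1) = -1 ∧ ixAt lam m < ixAt lam (m + 1)) ∨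
     (sgAt lam m = -1 ∧ sgAt lam (m + 1) = 1)
  then 1 else 0

/-- p_m = ⌊(|λ_{i_m}| − |λ_{i_{m+1}}| − β_m)/b⌋ (b plays the role of r−1). -/
noncomputable def pAt (b : ℤ) (lam : Fin n → ℤ) (m : ℕ) : ℤ :=
  Int.fdiv (absAt lam m - absAt lam (m + 1) - betaAt lam m) b

/-- the b-quotient λ^{quot} (b plays the role of r−1): j-th entry is p_j + ⋯ + p_n
(1-based j = (j:Fin n) + 1). -/
noncomputable def quotOf (b : ℤ) (lam : Fin n → ℤ) : Fin n → ℤ := fun j =>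
  ∑ m ∈ Finset.Icc ((j : ℕ) + 1) n, pAt b lam m

/-- fundamental weight ϖ_j (1-based j = (j : Fin n)+1): first j entries 1, rest 0. -/
def varpi (j : Fin n) : Fin n → ℤ := fun i => if i ≤ j then 1 else 0



/-- the map λ ↦ λ' of STATEMENT 19: λ'_{i_m} = λ_{i_m} − σ(λ)_{i_m}(r−1)(p_m + ⋯ + p_n). -/
noncomputable def Tmap (r : ℤ) (lam : Fin n → ℤ) : Fin n → ℤ := fun i =>
  lam i - sgn lam i * (r - 1) * ∑ m ∈ Finset.Icc (posOf lam i + 1) n, pAt (r - 1) lam m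

/-! ### Auxiliary infrastructure for Statement 19 -/

section Stmt19Aux

/-- sort key: `Prec lam i j ↔ key lam i < key lam j`. -/
noncomputable def key (lam : Fin n → ℤ) (i : Fin n) : ℤ ×ₗ ℤ :=
  toLex (-|lam i|, if 0 ≤ lam i then ((i : ℕ) : ℤ) else 2 * (n : ℤ) - 1 - ((i : ℕ) : ℤ))

lemma prec_iff_key (lam : Fin n → ℤ) (i j : Fin n) :
    Prec lam i j ↔ key lam i < key lam j := by
  have hi := i.isLt; have hj := j.isLt
  unfold Prec key
  rw [Prod.Lex.lt_iff]
  simp only [Fin.lt_def, ofLex_toLex]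
  split_ifs <;> omega

lemma key_injective (lam : Fin n → ℤ) : Function.Injective (key lam) := by
  intro i j h
  have hi := i.isLt; have hj := j.isLt
  unfold key at h
  have h2 := congrArg (fun p => (ofLex p).2) h
  simp only [ofLex_toLex] at h2
  exact Fin.ext (by split_ifs at h2 <;> omega)

lemma posOf_eq_card (lam : Fin n → ℤ) (i : Fin n) :
    posOf lam i = (Finset.univ.filter (fun j => key lam j < key lam i)).card := by
  unfold posOf
  exact congrArg Finset.card (Finset.filter_congr fun j _ => by
    simpa using prec_iff_key lam j i)

lemma posOf_lt_of_key_lt (lam : Fin n → ℤ) {i j : Fin n} (h : key lam i < key lam j) :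
    posOf lam i < posOf lam j := by
  rw [posOf_eq_card, posOf_eq_card]
  apply Finset.card_lt_card
  rw [Finset.ssubset_iff_subset_ne]
  constructor
  · intro k hk
    simp only [Finset.mem_filter, Finset.mem_univ, true_and] at hk ⊢
    exact hk.trans h
  · intro he
    have hi : i ∈ Finset.univ.filter (fun k => key lam k < key lam j) := by
      simp only [Finset.mem_filter, Finset.mem_univ, true_and]; exact h
    rw [← he] at hi
    simp only [Finset.mem_filter, Finset.mem_univ, true_and] at hi
    exact absurd hi (lt_irrefl _)

lemma key_lt_iff_posOf_lt (lam : Fin n → ℤ) (i j : Fin n) :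
    key lam i < key lam j ↔ posOf lam i < posOf lam j := by
  constructor
  · exact posOf_lt_of_key_lt lam
  · intro h
    rcases lt_trichotomy (key lam i) (key lam j) with h' | h' | h'
    · exact h'
    · exact absurd (key_injective lam h') (by rintro rfl; omega)
    · exact absurd (posOf_lt_of_key_lt lam h') (by omega)

lemma posOf_lt_n (lam : Fin n → ℤ) (i : Fin n) : posOf lam i < n := by
  rw [posOf_eq_card]
  have h1 : (Finset.univ.filter (fun j => key lam j < key lam i)) ⊆ Finset.univ.erase i := by
    intro k hk
    simp only [Finset.mem_filter, Finset.mem_univ, true_and] at hk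
    exact Finset.mem_erase.2 ⟨fun he => by subst he; exact absurd hk (lt_irrefl _),
      Finset.mem_univ _⟩
  have h2 := Finset.card_le_card h1
  rw [Finset.card_erase_of_mem (Finset.mem_univ i), Finset.card_univ, Fintype.card_fin] at h2
  have h3 := i.pos
  omega

/-- position function as a map `Fin n → Fin n`. -/
noncomputable def posFn (lam : Fin n → ℤ) : Fin n → Fin n :=
  fun i => ⟨posOf lam i, posOf_lt_n lam i⟩

lemma posFn_injective (lam : Fin n → ℤ) : Function.Injective (posFn lam) := by
  intro i j h
  have h' : posOf lam i = posOf lam j := congrArg Fin.val h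
  rcases lt_trichotomy (key lam i) (key lam j) with h2 | h2 | h2
  · exact absurd (posOf_lt_of_key_lt lam h2) (by omega)
  · exact key_injective lam h2
  · exact absurd (posOf_lt_of_key_lt lam h2) (by omega)

/-- the position equivalence. -/
noncomputable def posEquiv (lam : Fin n → ℤ) : Fin n ≃ Fin n :=
  Equiv.ofBijective _ ((Finite.injective_iff_bijective).1 (posFn_injective lam))

/-- `eIdx lam m` = the index at (0-based) position `m`. -/
noncomputable def eIdx (lam : Fin n → ℤ) : Fin n → Fin n := (posEquiv lam).symm

lemma eIdx_posFn (lam : Fin n → ℤ) (i : Fin n) : eIdx lam (posFn lam i) = i :=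
  (posEquiv lam).symm_apply_apply i

lemma posFn_eIdx (lam : Fin n → ℤ) (m : Fin n) : posFn lam (eIdx lam m) = m :=
  (posEquiv lam).apply_symm_apply m

lemma posOf_eIdx (lam : Fin n → ℤ) (m : Fin n) : posOf lam (eIdx lam m) = (m : ℕ) :=
  congrArg Fin.val (posFn_eIdx lam m)

lemma filter_posOf (lam : Fin n → ℤ) (m : ℕ) (hm : m < n) :
    Finset.univ.filter (fun i => posOf lam i + 1 = m + 1) = {eIdx lam ⟨m, hm⟩} := by
  ext i
  simp only [Finset.mem_filter, Finset.mem_univ, true_and, Finset.mem_singleton]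
  constructor
  · intro h
    have h2 : posFn lam i = ⟨m, hm⟩ := Fin.ext (by simpa [posFn] using Nat.succ_injective h)
    rw [← h2, eIdx_posFn]
  · rintro rfl
    rw [posOf_eIdx]

lemma absAt_pos (lam : Fin n → ℤ) (m : ℕ) (hm : m < n) :
    absAt lam (m + 1) = |lam (eIdx lam ⟨m, hm⟩)| := by
  unfold absAt
  rw [if_neg (by omega), filter_posOf lam m hm, Finset.sum_singleton]

lemma sgAt_pos (lam : Fin n → ℤ) (m : ℕ) (hm : m < n) :
    sgAt lam (m + 1) = sgn lam (eIdx lam ⟨m, hm⟩) := by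
  unfold sgAt
  rw [if_neg (by omega), filter_posOf lam m hm, Finset.sum_singleton]

lemma ixAt_pos (lam : Fin n → ℤ) (m : ℕ) (hm : m < n) :
    ixAt lam (m + 1) = ((eIdx lam ⟨m, hm⟩ : ℕ) + 1) := by
  unfold ixAt
  rw [if_neg (by omega), filter_posOf lam m hm, Finset.sum_singleton]

lemma absAt_top (lam : Fin n → ℤ) : absAt lam (n + 1) = 0 := if_pos rfl
lemma sgAt_top (lam : Fin n → ℤ) : sgAt lam (n + 1) = 1 := if_pos rfl
lemma ixAt_top (lam : Fin n → ℤ) : ixAt lam (n + 1) = n + 1 := if_pos rfl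

lemma key_eIdx_lt (lam : Fin n → ℤ) {m₁ m₂ : Fin n} (h : m₁ < m₂) :
    key lam (eIdx lam m₁) < key lam (eIdx lam m₂) := by
  rw [key_lt_iff_posOf_lt, posOf_eIdx, posOf_eIdx]
  exact h

lemma betaAt_nonneg (lam : Fin n → ℤ) (m : ℕ) : 0 ≤ betaAt lam m := by
  unfold betaAt; split_ifs <;> omega

lemma betaAt_le_one (lam : Fin n → ℤ) (m : ℕ) : betaAt lam m ≤ 1 := by
  unfold betaAt; split_ifs <;> omega

lemma eIdx_ne {lam : Fin n → ℤ} {m₁ m₂ : Fin n} (h : m₁ ≠ m₂) :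
    eIdx lam m₁ ≠ eIdx lam m₂ := fun he => h (by
  have := posOf_eIdx lam m₁
  rw [he, posOf_eIdx] at this
  exact Fin.ext this.symm)

/-- β_{m+1} (1-based) is at most the gap |λ_{i_{m+1}}| − |λ_{i_{m+2}}|. -/
lemma beta_le_gap (lam : Fin n → ℤ) (m : ℕ) (hm : m < n) :
    betaAt lam (m + 1) ≤ absAt lam (m + 1) - absAt lam (m + 1 + 1) := by
  rw [absAt_pos lam m hm]
  by_cases hm1 : m + 1 < n
  · -- real successor position
    rw [absAt_pos lam (m + 1) hm1]
    have hij : eIdx lam ⟨m, hm⟩ ≠ eIdx lam ⟨m + 1, hm1⟩ := eIdx_ne (by simp [Fin.ext_iff])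
    have hvij : ((eIdx lam ⟨m, hm⟩ : Fin n) : ℕ) ≠ ((eIdx lam ⟨m + 1, hm1⟩ : Fin n) : ℕ) :=
      fun h => hij (Fin.ext h)
    have hk : key lam (eIdx lam ⟨m, hm⟩) < key lam (eIdx lam ⟨m + 1, hm1⟩) :=
      key_eIdx_lt lam (by simp [Fin.lt_def])
    have hi := (eIdx lam (⟨m, hm⟩ : Fin n)).isLt
    have hj := (eIdx lam (⟨m + 1, hm1⟩ : Fin n)).isLt
    unfold key at hk
    rw [Prod.Lex.lt_iff] at hk
    simp only [ofLex_toLex] at hk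
    unfold betaAt
    rw [sgAt_pos lam m hm, sgAt_pos lam (m + 1) hm1, ixAt_pos lam m hm,
      ixAt_pos lam (m + 1) hm1]
    unfold sgn
    split_ifs at hk ⊢ <;>
      (try simp only [false_and, and_false, or_false, false_or, true_and, and_true, eq_self_iff_true, true_or, or_true, not_true, not_false_iff] at *) <;>
      omega
  · -- sentinel successor
    have hmn : m + 1 = n := by omega
    rw [show m + 1 + 1 = n + 1 by omega, absAt_top]
    unfold betaAt
    rw [sgAt_pos lam m hm, show m + 1 + 1 = n + 1 by omega, sgAt_top, ixAt_top,
      ixAt_pos lam m hm]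
    have hi := (eIdx lam (⟨m, hm⟩ : Fin n)).isLt
    have ha1 : 0 ≤ |lam (eIdx lam ⟨m, hm⟩)| := abs_nonneg _
    have ha2 : |lam (eIdx lam ⟨m, hm⟩)| = lam (eIdx lam ⟨m, hm⟩) ∨
        |lam (eIdx lam ⟨m, hm⟩)| = -lam (eIdx lam ⟨m, hm⟩) := abs_choice _
    unfold sgn
    split_ifs <;>
      (try simp only [false_and, and_false, or_false, false_or, true_and, and_true, eq_self_iff_true, true_or, or_true, not_true, not_false_iff] at *) <;>
      omega

/-- helper: `sgn` determines nonnegativity. -/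
lemma nonneg_iff_of_sgn_eq {lam lam' : Fin n → ℤ} {i : Fin n}
    (h : sgn lam' i = sgn lam i) : (0 ≤ lam' i) ↔ (0 ≤ lam i) := by
  unfold sgn at h
  split_ifs at h <;> omega

/-- the crucial order-transfer step: if `lam'` has the same signs as `lam` and the
adjacent gap of `|lam'|` dominates β, then the keys of `lam'` stay in order. -/
lemma key_lt_of_gap (lam lam' : Fin n → ℤ) (m : ℕ) (hm0 : m < n) (hm : m + 1 < n)
    (hsg : ∀ i, sgn lam' i = sgn lam i)
    (habs : betaAt lam (m + 1) ≤
      |lam' (eIdx lam ⟨m, hm0⟩)| - |lam' (eIdx lam ⟨m + 1, hm⟩)|) :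
    key lam' (eIdx lam ⟨m, hm0⟩) < key lam' (eIdx lam ⟨m + 1, hm⟩) := by
  have hij : eIdx lam ⟨m, hm0⟩ ≠ eIdx lam ⟨m + 1, hm⟩ := eIdx_ne (by simp [Fin.ext_iff])
  have hvij : ((eIdx lam ⟨m, hm0⟩ : Fin n) : ℕ) ≠ ((eIdx lam ⟨m + 1, hm⟩ : Fin n) : ℕ) :=
    fun h => hij (Fin.ext h)
  have hk : key lam (eIdx lam ⟨m, hm0⟩) < key lam (eIdx lam ⟨m + 1, hm⟩) :=
    key_eIdx_lt lam (by simp [Fin.lt_def])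
  have hi := (eIdx lam (⟨m, hm0⟩ : Fin n)).isLt
  have hj := (eIdx lam (⟨m + 1, hm⟩ : Fin n)).isLt
  have hsi := nonneg_iff_of_sgn_eq (hsg (eIdx lam ⟨m, hm0⟩))
  have hsj := nonneg_iff_of_sgn_eq (hsg (eIdx lam ⟨m + 1, hm⟩))
  unfold betaAt at habs
  rw [sgAt_pos lam m hm0, sgAt_pos lam (m + 1) hm, ixAt_pos lam m hm0,
    ixAt_pos lam (m + 1) hm] at habs
  unfold key at hk ⊢
  rw [Prod.Lex.lt_iff] at hk ⊢
  simp only [ofLex_toLex] at hk ⊢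
  simp only [show (0 ≤ lam' (eIdx lam ⟨m, hm0⟩)) = (0 ≤ lam (eIdx lam ⟨m, hm0⟩)) from propext hsi,
    show (0 ≤ lam' (eIdx lam ⟨m + 1, hm⟩)) = (0 ≤ lam (eIdx lam ⟨m + 1, hm⟩)) from propext hsj]
  unfold sgn at habs
  split_ifs at habs hk ⊢ <;>
      (try simp only [false_and, and_false, or_false, false_or, true_and, and_true, eq_self_iff_true, true_or, or_true, not_true, not_false_iff] at *) <;>
      omega

/-- downward induction from `n+1`. -/
lemma down_ind (P : ℕ → Prop) (hbase : P (n + 1))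
    (hstep : ∀ t, 1 ≤ t → t ≤ n → P (t + 1) → P t) :
    ∀ t, 1 ≤ t → t ≤ n + 1 → P t := by
  have H : ∀ d t, 1 ≤ t → t ≤ n + 1 → n + 1 - t ≤ d → P t := by
    intro d
    induction d with
    | zero =>
      intro t h1 h2 h3
      have : t = n + 1 := by omega
      subst this; exact hbase
    | succ d ih =>
      intro t h1 h2 h3
      by_cases ht : t = n + 1
      · subst ht; exact hbase
      · exact hstep t h1 (by omega) (ih (t + 1) (by omega) (by omega) (by omega))
  exact fun t h1 h2 => H (n + 1 - t) t h1 h2 le_rfl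

/-- partial sums of `pAt`. -/
noncomputable def Ssum (b : ℤ) (lam : Fin n → ℤ) (t : ℕ) : ℤ :=
  ∑ k ∈ Finset.Icc t n, pAt b lam k

lemma Ssum_top (b : ℤ) (lam : Fin n → ℤ) : Ssum b lam (n + 1) = 0 := by
  unfold Ssum
  rw [Finset.Icc_eq_empty (by omega), Finset.sum_empty]

lemma Ssum_cons (b : ℤ) (lam : Fin n → ℤ) (t : ℕ) (h : t ≤ n) :
    Ssum b lam t = pAt b lam t + Ssum b lam (t + 1) := by
  unfold Ssum
  rw [Finset.Icc_add_one_left_eq_Ioc, ← Finset.Ioc_insert_left h, Finset.sum_insert (by simp)]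

lemma fdiv_facts (b x : ℤ) (hb : 0 < b) (hx : 0 ≤ x) :
    0 ≤ x.fdiv b ∧ b * x.fdiv b ≤ x ∧ x < b * (x.fdiv b + 1) := by
  rw [Int.fdiv_eq_ediv_of_nonneg _ hb.le]
  have h := Int.mul_ediv_add_emod x b
  have h1 := Int.emod_nonneg x hb.ne'
  have h2 := Int.emod_lt_of_pos x hb
  refine ⟨Int.ediv_nonneg hx hb.le, by linarith, by nlinarith⟩

lemma fdiv_eq_zero_of_lt (b x : ℤ) (hb : 0 < b) (hx : 0 ≤ x) (hxb : x < b) :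
    x.fdiv b = 0 := by
  rw [Int.fdiv_eq_ediv_of_nonneg _ hb.le]
  exact Int.ediv_eq_zero_of_lt hx hxb

lemma pAt_facts (b : ℤ) (hb : 0 < b) (lam : Fin n → ℤ) (m : ℕ) (hm : m < n) :
    0 ≤ pAt b lam (m + 1) ∧
    b * pAt b lam (m + 1) ≤ absAt lam (m + 1) - absAt lam (m + 1 + 1) - betaAt lam (m + 1) ∧
    absAt lam (m + 1) - absAt lam (m + 1 + 1) - betaAt lam (m + 1) < b * (pAt b lam (m + 1) + 1) := by
  have hx : 0 ≤ absAt lam (m + 1) - absAt lam (m + 1 + 1) - betaAt lam (m + 1) := by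
    have := beta_le_gap lam m hm; omega
  exact fdiv_facts b _ hb hx

/-- if σ at position `m` (0-based) is negative, the β's from there on sum to at least 1. -/
lemma beta_sum_ge_one (lam : Fin n → ℤ) :
    ∀ t, 1 ≤ t → t ≤ n → sgAt lam t = -1 → 1 ≤ ∑ k ∈ Finset.Icc t n, betaAt lam k := by
  have H : ∀ d t, 1 ≤ t → t ≤ n → n - t ≤ d → sgAt lam t = -1 →
      1 ≤ ∑ k ∈ Finset.Icc t n, betaAt lam k := by
    intro d
    induction d with
    | zero =>
      intro t h1 h2 h3 hsg
      have ht : t = n := by omega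
      subst ht
      rw [Finset.Icc_self, Finset.sum_singleton]
      unfold betaAt
      rw [hsg, sgAt_top, ixAt_top]
      rw [if_pos (Or.inr (Or.inr ⟨rfl, rfl⟩))]
    | succ d ih =>
      intro t h1 h2 h3 hsg
      by_cases ht : t = n
      · subst ht
        rw [Finset.Icc_self, Finset.sum_singleton]
        unfold betaAt
        rw [hsg, sgAt_top, ixAt_top]
        rw [if_pos (Or.inr (Or.inr ⟨rfl, rfl⟩))]
      · have ht1 : t + 1 ≤ n := by omega
        have hsum : ∑ k ∈ Finset.Icc t n, betaAt lam k
            = betaAt lam t + ∑ k ∈ Finset.Icc (t + 1) n, betaAt lam k := by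
          rw [Finset.Icc_add_one_left_eq_Ioc, ← Finset.Ioc_insert_left (by omega : t ≤ n),
            Finset.sum_insert (by simp)]
        by_cases hs : sgAt lam (t + 1) = -1
        · have := ih (t + 1) (by omega) ht1 (by omega) hs
          have hb := betaAt_nonneg lam t
          omega
        · -- σ at t+1 is +1, so β_t = 1
          have hs1 : sgAt lam (t + 1) = 1 := by
            rw [sgAt_pos lam t (by omega)] at hs ⊢
            unfold sgn at hs ⊢
            split_ifs at hs ⊢ <;> omega
          have hbeta : betaAt lam t = 1 := by
            unfold betaAt
            rw [hsg, hs1]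
            rw [if_pos (Or.inr (Or.inr ⟨rfl, rfl⟩))]
          have hrest : 0 ≤ ∑ k ∈ Finset.Icc (t + 1) n, betaAt lam k :=
            Finset.sum_nonneg fun k _ => betaAt_nonneg lam k
          omega
  exact fun t h1 h2 hsg => H (n - t) t h1 h2 le_rfl (by exact hsg)

lemma betaSum_nonneg (lam : Fin n → ℤ) (t : ℕ) :
    0 ≤ ∑ k ∈ Finset.Icc t n, betaAt lam k :=
  Finset.sum_nonneg fun k _ => betaAt_nonneg lam k

/-- main bound: `b·S_t + Σ_{k≥t} β_k ≤ |λ_{i_t}|`. -/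
lemma Ssum_bound (b : ℤ) (hb : 0 < b) (lam : Fin n → ℤ) :
    ∀ t, 1 ≤ t → t ≤ n + 1 →
      b * Ssum b lam t + (∑ k ∈ Finset.Icc t n, betaAt lam k) ≤ absAt lam t := by
  apply down_ind
  · rw [Ssum_top, absAt_top, Finset.Icc_eq_empty (by omega), Finset.sum_empty]
    omega
  · intro t h1 h2 ih
    have hm : t - 1 < n := by omega
    have hfacts := pAt_facts b hb lam (t - 1) hm
    rw [show t - 1 + 1 = t by omega] at hfacts
    have hsum : ∑ k ∈ Finset.Icc t n, betaAt lam k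
        = betaAt lam t + ∑ k ∈ Finset.Icc (t + 1) n, betaAt lam k := by
      rw [Finset.Icc_add_one_left_eq_Ioc, ← Finset.Ioc_insert_left (by omega : t ≤ n),
        Finset.sum_insert (by simp)]
    rw [Ssum_cons b lam t h2, hsum]
    have hexp : b * (pAt b lam t + Ssum b lam (t + 1)) =
        b * pAt b lam t + b * Ssum b lam (t + 1) := by ring
    omega

lemma Ssum_nonneg (b : ℤ) (hb : 0 < b) (lam : Fin n → ℤ) (t : ℕ) (ht : 1 ≤ t) :
    0 ≤ Ssum b lam t := by
  unfold Ssum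
  apply Finset.sum_nonneg
  intro k hk
  simp only [Finset.mem_Icc] at hk
  have := pAt_facts b hb lam (k - 1) (by omega)
  rw [show k - 1 + 1 = k by omega] at this
  exact this.1

lemma abs_posOf (lam : Fin n → ℤ) (i : Fin n) : absAt lam (posOf lam i + 1) = |lam i| := by
  rw [absAt_pos lam (posOf lam i) (posOf_lt_n lam i),
    show (⟨posOf lam i, posOf_lt_n lam i⟩ : Fin n) = posFn lam i from rfl, eIdx_posFn]

lemma sgAt_posOf (lam : Fin n → ℤ) (i : Fin n) : sgAt lam (posOf lam i + 1) = sgn lam i := by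
  rw [sgAt_pos lam (posOf lam i) (posOf_lt_n lam i),
    show (⟨posOf lam i, posOf_lt_n lam i⟩ : Fin n) = posFn lam i from rfl, eIdx_posFn]

lemma tmap_vals (r : ℤ) (hr : 1 ≤ r - 1) (lam : Fin n → ℤ) (i : Fin n) :
    sgn (Tmap r lam) i = sgn lam i ∧
    |Tmap r lam i| = |lam i| - (r - 1) * Ssum (r - 1) lam (posOf lam i + 1) := by
  have hb : (0:ℤ) < r - 1 := by omega
  have hposn := posOf_lt_n lam i
  have h1 := Ssum_bound (r - 1) hb lam (posOf lam i + 1) (by omega) (by omega)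
  rw [abs_posOf] at h1
  have h2 := betaSum_nonneg lam (posOf lam i + 1)
  have h3 : lam i < 0 → 1 ≤ ∑ k ∈ Finset.Icc (posOf lam i + 1) n, betaAt lam k := by
    intro hneg
    apply beta_sum_ge_one lam _ (by omega) (by omega)
    rw [sgAt_posOf]
    unfold sgn
    rw [if_neg (by omega)]
  have hS0 : 0 ≤ Ssum (r - 1) lam (posOf lam i + 1) := Ssum_nonneg _ hb lam _ (by omega)
  have hTi : Tmap r lam i
      = lam i - sgn lam i * ((r - 1) * Ssum (r - 1) lam (posOf lam i + 1)) := by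
    unfold Tmap Ssum; ring
  set P := (r - 1) * Ssum (r - 1) lam (posOf lam i + 1) with hP
  have hPn : 0 ≤ P := mul_nonneg (by omega) hS0
  by_cases h : 0 ≤ lam i
  · have hsgn : sgn lam i = 1 := if_pos h
    have hT : Tmap r lam i = lam i - P := by rw [hTi, hsgn]; ring
    have habs := abs_of_nonneg h
    have hT0 : 0 ≤ Tmap r lam i := by omega
    refine ⟨by unfold sgn; rw [if_pos hT0, if_pos h], ?_⟩
    rw [abs_of_nonneg hT0]
    omega
  · have hsgn : sgn lam i = -1 := if_neg h
    have hT : Tmap r lam i = lam i + P := by rw [hTi, hsgn]; ring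
    have habs := abs_of_neg (by omega : lam i < 0)
    have h3' := h3 (by omega)
    have hT0 : Tmap r lam i < 0 := by omega
    refine ⟨by unfold sgn; rw [if_neg (by omega), if_neg h], ?_⟩
    rw [abs_of_neg hT0]
    omega

/-- order-transfer: if the keys of `lam'` are increasing along the `lam`-order,
then positions agree. -/
lemma posOf_eq_of_keys (lam lam' : Fin n → ℤ)
    (hadj : ∀ m₁ m₂ : Fin n, (m₁ : ℕ) + 1 = (m₂ : ℕ) →
      key lam' (eIdx lam m₁) < key lam' (eIdx lam m₂)) :
    ∀ i, posOf lam' i = posOf lam i := by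
  have hmono : StrictMono (fun m : Fin n => key lam' (eIdx lam m)) := by
    cases n with
    | zero => intro a; exact absurd a.isLt (by omega)
    | succ n' =>
      rw [Fin.strictMono_iff_lt_succ]
      intro m
      exact hadj (Fin.castSucc m) m.succ (by simp)
  have hkeyiff : ∀ i j : Fin n, (key lam' i < key lam' j ↔ key lam i < key lam j) := by
    intro i j
    calc key lam' i < key lam' j
        ↔ key lam' (eIdx lam (posFn lam i)) < key lam' (eIdx lam (posFn lam j)) := by
          rw [eIdx_posFn, eIdx_posFn]
      _ ↔ posFn lam i < posFn lam j := hmono.lt_iff_lt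
      _ ↔ posOf lam i < posOf lam j := Iff.rfl
      _ ↔ key lam i < key lam j := (key_lt_iff_posOf_lt lam i j).symm
  intro i
  rw [posOf_eq_card, posOf_eq_card]
  exact congrArg Finset.card (Finset.filter_congr fun j _ => by simpa using hkeyiff j i)

lemma eIdx_eq_of_posOf (lam lam' : Fin n → ℤ) (h : ∀ i, posOf lam' i = posOf lam i) :
    eIdx lam' = eIdx lam := by
  funext m
  apply posFn_injective lam'
  rw [posFn_eIdx]
  apply Fin.ext
  show (m : ℕ) = posOf lam' (eIdx lam m)
  rw [h (eIdx lam m), posOf_eIdx]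

/-- transfer of the combinatorial statistics. -/
lemma statsAt_eq (lam lam' : Fin n → ℤ) (hpos : ∀ i, posOf lam' i = posOf lam i)
    (hsg : ∀ i, sgn lam' i = sgn lam i) :
    (∀ t, sgAt lam' t = sgAt lam t) ∧ (∀ t, ixAt lam' t = ixAt lam t) ∧
    (∀ t, betaAt lam' t = betaAt lam t) := by
  have hfil : ∀ t, Finset.univ.filter (fun i => posOf lam' i + 1 = t)
      = Finset.univ.filter (fun i => posOf lam i + 1 = t) := by
    intro t
    exact Finset.filter_congr fun i _ => by rw [hpos i]
  have h1 : ∀ t, sgAt lam' t = sgAt lam t := by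
    intro t
    unfold sgAt
    by_cases ht : t = n + 1
    · rw [if_pos ht, if_pos ht]
    · rw [if_neg ht, if_neg ht, hfil t]
      exact Finset.sum_congr rfl fun i _ => hsg i
  have h2 : ∀ t, ixAt lam' t = ixAt lam t := by
    intro t
    unfold ixAt
    by_cases ht : t = n + 1
    · rw [if_pos ht, if_pos ht]
    · rw [if_neg ht, if_neg ht, hfil t]
  refine ⟨h1, h2, fun t => ?_⟩
  unfold betaAt
  rw [h1 t, h1 (t + 1), h2 t, h2 (t + 1)]

lemma quotOf_eq_Ssum (b : ℤ) (lam : Fin n → ℤ) (j : Fin n) :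
    quotOf b lam j = Ssum b lam ((j : ℕ) + 1) := rfl

lemma tmap_posOf (r : ℤ) (hr : 1 ≤ r - 1) (lam : Fin n → ℤ) :
    ∀ i, posOf (Tmap r lam) i = posOf lam i := by
  have hb : (0:ℤ) < r - 1 := by omega
  apply posOf_eq_of_keys
  intro m₁ m₂ hm12
  have hm0 : (m₁ : ℕ) < n := m₁.isLt
  have hm : (m₁ : ℕ) + 1 < n := by have := m₂.isLt; omega
  have e1 : (⟨(m₁ : ℕ), hm0⟩ : Fin n) = m₁ := Fin.ext rfl
  have e2 : (⟨(m₁ : ℕ) + 1, hm⟩ : Fin n) = m₂ := Fin.ext hm12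
  rw [← e1, ← e2]
  apply key_lt_of_gap lam (Tmap r lam) (m₁ : ℕ) hm0 hm (fun i => (tmap_vals r hr lam i).1)
  -- gap estimate
  have hvi : |Tmap r lam (eIdx lam ⟨(m₁ : ℕ), hm0⟩)|
      = |lam (eIdx lam ⟨(m₁ : ℕ), hm0⟩)| - (r - 1) * Ssum (r - 1) lam ((m₁ : ℕ) + 1) := by
    have h := (tmap_vals r hr lam (eIdx lam ⟨(m₁ : ℕ), hm0⟩)).2
    rwa [posOf_eIdx lam ⟨(m₁ : ℕ), hm0⟩] at h
  have hvj : |Tmap r lam (eIdx lam ⟨(m₁ : ℕ) + 1, hm⟩)|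
      = |lam (eIdx lam ⟨(m₁ : ℕ) + 1, hm⟩)| - (r - 1) * Ssum (r - 1) lam ((m₁ : ℕ) + 1 + 1) := by
    have h := (tmap_vals r hr lam (eIdx lam ⟨(m₁ : ℕ) + 1, hm⟩)).2
    rwa [posOf_eIdx lam ⟨(m₁ : ℕ) + 1, hm⟩] at h
  have hai : |lam (eIdx lam ⟨(m₁ : ℕ), hm0⟩)| = absAt lam ((m₁ : ℕ) + 1) :=
    (absAt_pos lam (m₁ : ℕ) hm0).symm
  have haj : |lam (eIdx lam ⟨(m₁ : ℕ) + 1, hm⟩)| = absAt lam ((m₁ : ℕ) + 1 + 1) :=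
    (absAt_pos lam ((m₁ : ℕ) + 1) hm).symm
  have hcons := Ssum_cons (r - 1) lam ((m₁ : ℕ) + 1) (by omega)
  have hfacts := pAt_facts (r - 1) hb lam (m₁ : ℕ) hm0
  have hexp : (r - 1) * (pAt (r - 1) lam ((m₁ : ℕ) + 1) + Ssum (r - 1) lam ((m₁ : ℕ) + 1 + 1))
      = (r - 1) * pAt (r - 1) lam ((m₁ : ℕ) + 1)
        + (r - 1) * Ssum (r - 1) lam ((m₁ : ℕ) + 1 + 1) := by ring
  have hexp2 : (r - 1) * (pAt (r - 1) lam ((m₁ : ℕ) + 1) + 1)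
      = (r - 1) * pAt (r - 1) lam ((m₁ : ℕ) + 1) + (r - 1) := by ring
  rw [hvi, hvj, hai, haj, hcons, hexp]
  omega

lemma absAt_tmap (r : ℤ) (hr : 1 ≤ r - 1) (lam : Fin n → ℤ) (t : ℕ) (h1 : 1 ≤ t)
    (h2 : t ≤ n + 1) :
    absAt (Tmap r lam) t = absAt lam t - (r - 1) * Ssum (r - 1) lam t := by
  by_cases ht : t = n + 1
  · subst ht
    rw [absAt_top, absAt_top, Ssum_top]
    ring
  · have htn : t - 1 < n := by omega
    have he := eIdx_eq_of_posOf lam (Tmap r lam) (tmap_posOf r hr lam)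
    have h3 := absAt_pos (Tmap r lam) (t - 1) htn
    rw [show t - 1 + 1 = t by omega, he] at h3
    have hv := (tmap_vals r hr lam (eIdx lam ⟨t - 1, htn⟩)).2
    rw [posOf_eIdx lam ⟨t - 1, htn⟩] at hv
    have h4 := absAt_pos lam (t - 1) htn
    rw [show t - 1 + 1 = t by omega] at h4 hv
    rw [h3, hv, h4]

lemma tmap_quot (r : ℤ) (hr : 1 ≤ r - 1) (lam : Fin n → ℤ) :
    quotOf (r - 1) (Tmap r lam) = fun _ => 0 := by
  have hb : (0:ℤ) < r - 1 := by omega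
  have hpos := tmap_posOf r hr lam
  have hsg : ∀ i, sgn (Tmap r lam) i = sgn lam i := fun i => (tmap_vals r hr lam i).1
  have hstats := statsAt_eq lam (Tmap r lam) hpos hsg
  funext j
  show Ssum (r - 1) (Tmap r lam) ((j : ℕ) + 1) = 0
  unfold Ssum
  apply Finset.sum_eq_zero
  intro k hk
  simp only [Finset.mem_Icc] at hk
  have hk1 : 1 ≤ k := by omega
  have hk2 : k ≤ n := hk.2
  unfold pAt
  rw [absAt_tmap r hr lam k hk1 (by omega), absAt_tmap r hr lam (k + 1) (by omega) (by omega),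
    hstats.2.2 k]
  have hcons := Ssum_cons (r - 1) lam k hk2
  have hfacts := pAt_facts (r - 1) hb lam (k - 1) (by omega)
  rw [show k - 1 + 1 = k by omega] at hfacts
  have hexp : (r - 1) * (pAt (r - 1) lam k + Ssum (r - 1) lam (k + 1))
      = (r - 1) * pAt (r - 1) lam k + (r - 1) * Ssum (r - 1) lam (k + 1) := by ring
  have hexp2 : (r - 1) * (pAt (r - 1) lam k + 1)
      = (r - 1) * pAt (r - 1) lam k + (r - 1) := by ring
  apply fdiv_eq_zero_of_lt (r - 1) _ hb
  · rw [hcons, hexp]; omega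
  · rw [hcons, hexp]; omega

/-- inverse map of `Tmap` on the fiber over `mu`. -/
noncomputable def Umap (r : ℤ) (mu nu : Fin n → ℤ) : Fin n → ℤ :=
  fun i => nu i + sgn nu i * (r - 1) * mu (posFn nu i)

/-- `Tval mu t` = μ_t (1-based), with sentinel 0 outside [1,n]. -/
noncomputable def Tval (mu : Fin n → ℤ) (t : ℕ) : ℤ :=
  if h : 1 ≤ t ∧ t ≤ n then mu ⟨t - 1, by omega⟩ else 0

lemma Tval_nonneg (mu : Fin n → ℤ) (hmu2 : ∀ i, 0 ≤ mu i) (t : ℕ) : 0 ≤ Tval mu t := by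
  unfold Tval
  split_ifs with h
  · exact hmu2 _
  · exact le_refl 0

lemma Tval_mono (mu : Fin n → ℤ) (hmu1 : ∀ i j : Fin n, i ≤ j → mu j ≤ mu i)
    (hmu2 : ∀ i, 0 ≤ mu i) (t : ℕ) (ht : 1 ≤ t) : Tval mu (t + 1) ≤ Tval mu t := by
  unfold Tval
  split_ifs with h1 h2 h2
  · exact hmu1 ⟨t - 1, by omega⟩ ⟨t + 1 - 1, by omega⟩ (by simp only [Fin.le_def]; omega)
  · exact absurd ⟨by omega, by omega⟩ h2
  · exact hmu2 _
  · exact le_refl 0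

lemma Tval_posOf (mu nu : Fin n → ℤ) (i : Fin n) :
    Tval mu (posOf nu i + 1) = mu (posFn nu i) := by
  unfold Tval
  rw [dif_pos ⟨by omega, by have := posOf_lt_n nu i; omega⟩]
  exact congrArg mu (Fin.ext (by show posOf nu i + 1 - 1 = posOf nu i; omega))

lemma umap_vals (r : ℤ) (hr : 1 ≤ r - 1) (mu nu : Fin n → ℤ) (hmu2 : ∀ i, 0 ≤ mu i)
    (i : Fin n) :
    sgn (Umap r mu nu) i = sgn nu i ∧
    |Umap r mu nu i| = |nu i| + (r - 1) * Tval mu (posOf nu i + 1) := by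
  have hUi : Umap r mu nu i = nu i + sgn nu i * ((r - 1) * Tval mu (posOf nu i + 1)) := by
    rw [Tval_posOf]; unfold Umap; ring
  set P := (r - 1) * Tval mu (posOf nu i + 1) with hP
  have hPn : 0 ≤ P := mul_nonneg (by omega) (Tval_nonneg mu hmu2 _)
  by_cases h : 0 ≤ nu i
  · have hsgn : sgn nu i = 1 := if_pos h
    have hU : Umap r mu nu i = nu i + P := by rw [hUi, hsgn]; ring
    have habs := abs_of_nonneg h
    have hU0 : 0 ≤ Umap r mu nu i := by omega
    refine ⟨by unfold sgn; rw [if_pos hU0, if_pos h], ?_⟩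
    rw [abs_of_nonneg hU0]
    omega
  · have hsgn : sgn nu i = -1 := if_neg h
    have hU : Umap r mu nu i = nu i - P := by rw [hUi, hsgn]; ring
    have habs := abs_of_neg (by omega : nu i < 0)
    have hU0 : Umap r mu nu i < 0 := by omega
    refine ⟨by unfold sgn; rw [if_neg (by omega), if_neg h], ?_⟩
    rw [abs_of_neg hU0]
    omega

lemma pAt_zero_of_quot_zero (r : ℤ) (hr : 1 ≤ r - 1) (nu : Fin n → ℤ)
    (hq : quotOf (r - 1) nu = fun _ => 0) :
    ∀ t, 1 ≤ t → t ≤ n → pAt (r - 1) nu t = 0 := by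
  have hS : ∀ t, 1 ≤ t → t ≤ n → Ssum (r - 1) nu t = 0 := by
    intro t h1 h2
    have h3 : Ssum (r - 1) nu (t - 1 + 1) = 0 := congrFun hq ⟨t - 1, by omega⟩
    rwa [show t - 1 + 1 = t by omega] at h3
  intro t h1 h2
  have hcons := Ssum_cons (r - 1) nu t h2
  have hS1 := hS t h1 h2
  have hS2 : Ssum (r - 1) nu (t + 1) = 0 := by
    by_cases ht : t = n
    · subst ht; exact Ssum_top _ _
    · exact hS (t + 1) (by omega) (by omega)
  omega

lemma umap_posOf (r : ℤ) (hr : 1 ≤ r - 1) (mu nu : Fin n → ℤ)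
    (hmu1 : ∀ i j : Fin n, i ≤ j → mu j ≤ mu i) (hmu2 : ∀ i, 0 ≤ mu i)
    (hq : quotOf (r - 1) nu = fun _ => 0) :
    ∀ i, posOf (Umap r mu nu) i = posOf nu i := by
  have hb : (0:ℤ) < r - 1 := by omega
  apply posOf_eq_of_keys
  intro m₁ m₂ hm12
  have hm0 : (m₁ : ℕ) < n := m₁.isLt
  have hm : (m₁ : ℕ) + 1 < n := by have := m₂.isLt; omega
  have e1 : (⟨(m₁ : ℕ), hm0⟩ : Fin n) = m₁ := Fin.ext rfl
  have e2 : (⟨(m₁ : ℕ) + 1, hm⟩ : Fin n) = m₂ := Fin.ext hm12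
  rw [← e1, ← e2]
  apply key_lt_of_gap nu (Umap r mu nu) (m₁ : ℕ) hm0 hm
    (fun i => (umap_vals r hr mu nu hmu2 i).1)
  have hvi : |Umap r mu nu (eIdx nu ⟨(m₁ : ℕ), hm0⟩)|
      = |nu (eIdx nu ⟨(m₁ : ℕ), hm0⟩)| + (r - 1) * Tval mu ((m₁ : ℕ) + 1) := by
    have h := (umap_vals r hr mu nu hmu2 (eIdx nu ⟨(m₁ : ℕ), hm0⟩)).2
    rwa [posOf_eIdx nu ⟨(m₁ : ℕ), hm0⟩] at h
  have hvj : |Umap r mu nu (eIdx nu ⟨(m₁ : ℕ) + 1, hm⟩)|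
      = |nu (eIdx nu ⟨(m₁ : ℕ) + 1, hm⟩)| + (r - 1) * Tval mu ((m₁ : ℕ) + 1 + 1) := by
    have h := (umap_vals r hr mu nu hmu2 (eIdx nu ⟨(m₁ : ℕ) + 1, hm⟩)).2
    rwa [posOf_eIdx nu ⟨(m₁ : ℕ) + 1, hm⟩] at h
  have hai : |nu (eIdx nu ⟨(m₁ : ℕ), hm0⟩)| = absAt nu ((m₁ : ℕ) + 1) :=
    (absAt_pos nu (m₁ : ℕ) hm0).symm
  have haj : |nu (eIdx nu ⟨(m₁ : ℕ) + 1, hm⟩)| = absAt nu ((m₁ : ℕ) + 1 + 1) :=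
    (absAt_pos nu ((m₁ : ℕ) + 1) hm).symm
  have hfacts := pAt_facts (r - 1) hb nu (m₁ : ℕ) hm0
  rw [pAt_zero_of_quot_zero r hr nu hq ((m₁ : ℕ) + 1) (by omega) (by omega)] at hfacts
  have hT := Tval_mono mu hmu1 hmu2 ((m₁ : ℕ) + 1) (by omega)
  have hbT : 0 ≤ (r - 1) * (Tval mu ((m₁ : ℕ) + 1) - Tval mu ((m₁ : ℕ) + 1 + 1)) :=
    mul_nonneg (by omega) (by omega)
  have hexp3 : (r - 1) * Tval mu ((m₁ : ℕ) + 1) - (r - 1) * Tval mu ((m₁ : ℕ) + 1 + 1)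
      = (r - 1) * (Tval mu ((m₁ : ℕ) + 1) - Tval mu ((m₁ : ℕ) + 1 + 1)) := by ring
  rw [hvi, hvj, hai, haj]
  omega

lemma absAt_umap (r : ℤ) (hr : 1 ≤ r - 1) (mu nu : Fin n → ℤ)
    (hmu1 : ∀ i j : Fin n, i ≤ j → mu j ≤ mu i) (hmu2 : ∀ i, 0 ≤ mu i)
    (hq : quotOf (r - 1) nu = fun _ => 0) (t : ℕ) (h1 : 1 ≤ t) (h2 : t ≤ n + 1) :
    absAt (Umap r mu nu) t = absAt nu t + (r - 1) * Tval mu t := by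
  by_cases ht : t = n + 1
  · subst ht
    rw [absAt_top, absAt_top]
    unfold Tval
    rw [dif_neg (by omega)]
    ring
  · have htn : t - 1 < n := by omega
    have he := eIdx_eq_of_posOf nu (Umap r mu nu) (umap_posOf r hr mu nu hmu1 hmu2 hq)
    have h3 := absAt_pos (Umap r mu nu) (t - 1) htn
    rw [show t - 1 + 1 = t by omega, he] at h3
    have hv : |Umap r mu nu (eIdx nu ⟨t - 1, htn⟩)|
        = |nu (eIdx nu ⟨t - 1, htn⟩)| + (r - 1) * Tval mu (t - 1 + 1) := by
      have h := (umap_vals r hr mu nu hmu2 (eIdx nu ⟨t - 1, htn⟩)).2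
      rwa [posOf_eIdx nu ⟨t - 1, htn⟩] at h
    have h4 := absAt_pos nu (t - 1) htn
    rw [show t - 1 + 1 = t by omega] at h4 hv
    rw [h3, hv, h4]

lemma fdiv_add_mul (b x c : ℤ) (hb : 0 < b) : (x + b * c).fdiv b = x.fdiv b + c := by
  rw [Int.fdiv_eq_ediv_of_nonneg _ hb.le, Int.fdiv_eq_ediv_of_nonneg _ hb.le, Int.add_mul_ediv_left x c hb.ne']

lemma umap_quot (r : ℤ) (hr : 1 ≤ r - 1) (mu nu : Fin n → ℤ)
    (hmu1 : ∀ i j : Fin n, i ≤ j → mu j ≤ mu i) (hmu2 : ∀ i, 0 ≤ mu i)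
    (hq : quotOf (r - 1) nu = fun _ => 0) :
    quotOf (r - 1) (Umap r mu nu) = mu ∧
    (∀ t, 1 ≤ t → t ≤ n + 1 → Ssum (r - 1) (Umap r mu nu) t = Tval mu t) := by
  have hb : (0:ℤ) < r - 1 := by omega
  have hpos := umap_posOf r hr mu nu hmu1 hmu2 hq
  have hsg : ∀ i, sgn (Umap r mu nu) i = sgn nu i :=
    fun i => (umap_vals r hr mu nu hmu2 i).1
  have hstats := statsAt_eq nu (Umap r mu nu) hpos hsg
  have hpU : ∀ t, 1 ≤ t → t ≤ n →
      pAt (r - 1) (Umap r mu nu) t = Tval mu t - Tval mu (t + 1) := by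
    intro t h1 h2
    unfold pAt
    rw [absAt_umap r hr mu nu hmu1 hmu2 hq t h1 (by omega),
      absAt_umap r hr mu nu hmu1 hmu2 hq (t + 1) (by omega) (by omega), hstats.2.2 t]
    have hfacts := pAt_facts (r - 1) hb nu (t - 1) (by omega)
    rw [show t - 1 + 1 = t by omega,
      pAt_zero_of_quot_zero r hr nu hq t h1 h2] at hfacts
    have hnum : absAt nu t + (r - 1) * Tval mu t - (absAt nu (t + 1) + (r - 1) * Tval mu (t + 1))
        - betaAt nu t
        = (absAt nu t - absAt nu (t + 1) - betaAt nu t)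
          + (r - 1) * (Tval mu t - Tval mu (t + 1)) := by ring
    rw [hnum, fdiv_add_mul (r - 1) _ _ hb,
      fdiv_eq_zero_of_lt (r - 1) _ hb (by omega) (by omega)]
    omega
  have hSU : ∀ t, 1 ≤ t → t ≤ n + 1 → Ssum (r - 1) (Umap r mu nu) t = Tval mu t := by
    apply down_ind
    · rw [Ssum_top]
      unfold Tval
      rw [dif_neg (by omega)]
    · intro t h1 h2 ih
      rw [Ssum_cons _ _ t h2, ih, hpU t h1 h2]
      ring
  refine ⟨funext fun j => ?_, hSU⟩
  have hj := j.isLt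
  have h5 : quotOf (r - 1) (Umap r mu nu) j = Ssum (r - 1) (Umap r mu nu) ((j : ℕ) + 1) := rfl
  rw [h5, hSU ((j : ℕ) + 1) (by omega) (by omega)]
  unfold Tval
  rw [dif_pos ⟨by omega, by omega⟩]
  exact congrArg mu (Fin.ext (by simp))

lemma tmap_umap (r : ℤ) (hr : 1 ≤ r - 1) (mu nu : Fin n → ℤ)
    (hmu1 : ∀ i j : Fin n, i ≤ j → mu j ≤ mu i) (hmu2 : ∀ i, 0 ≤ mu i)
    (hq : quotOf (r - 1) nu = fun _ => 0) :
    Tmap r (Umap r mu nu) = nu := by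
  have hb : (0:ℤ) < r - 1 := by omega
  have hpos := umap_posOf r hr mu nu hmu1 hmu2 hq
  have hsg : ∀ i, sgn (Umap r mu nu) i = sgn nu i :=
    fun i => (umap_vals r hr mu nu hmu2 i).1
  have hSU := (umap_quot r hr mu nu hmu1 hmu2 hq).2
  funext i
  have hposn := posOf_lt_n nu i
  have hT : Tmap r (Umap r mu nu) i = Umap r mu nu i
      - sgn (Umap r mu nu) i * ((r - 1) * Ssum (r - 1) (Umap r mu nu) (posOf (Umap r mu nu) i + 1)) := by
    unfold Tmap Ssum; ring
  rw [hT, hsg i, hpos i, hSU (posOf nu i + 1) (by omega) (by omega), Tval_posOf]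
  unfold Umap
  ring

lemma umap_of_quot (r : ℤ) (hr : 1 ≤ r - 1) (mu lam : Fin n → ℤ)
    (hq : quotOf (r - 1) lam = mu) :
    Umap r mu (Tmap r lam) = lam := by
  have hsg : ∀ i, sgn (Tmap r lam) i = sgn lam i := fun i => (tmap_vals r hr lam i).1
  have hpos := tmap_posOf r hr lam
  funext i
  have hposFn : posFn (Tmap r lam) i = posFn lam i := Fin.ext (hpos i)
  have hmu : mu (posFn lam i) = Ssum (r - 1) lam (posOf lam i + 1) := by
    rw [← hq]
    rfl
  have hT : Tmap r lam i
      = lam i - sgn lam i * ((r - 1) * Ssum (r - 1) lam (posOf lam i + 1)) := by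
    unfold Tmap Ssum; ring
  show Tmap r lam i + sgn (Tmap r lam) i * (r - 1) * mu (posFn (Tmap r lam) i) = lam i
  rw [hsg i, hposFn, hmu, hT]
  ring

end Stmt19Aux

/-- the map λ ↦ λ' preserves ρ, σ and residues mod r−1, sends the
(r−1)-quotient to (0,…,0), and is a bijection from ℤ^n_μ onto ℤ^n_{(0,…,0)}. -/
theorem stmt19 (n : ℕ) (hn : 2 ≤ n) (r : ℤ) (hr : 1 ≤ r - 1)
    (mu : Fin n → ℤ) (hmu1 : ∀ i j : Fin n, i ≤ j → mu j ≤ mu i) (hmu2 : ∀ i, 0 ≤ mu i) :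
    (∀ lam : Fin n → ℤ, quotOf (r - 1) lam = mu →
      (∀ i, rho (Tmap r lam) i = rho lam i) ∧
      (∀ i, sgn (Tmap r lam) i = sgn lam i) ∧
      (∀ i, (r - 1) ∣ (Tmap r lam i - lam i)) ∧
      quotOf (r - 1) (Tmap r lam) = (fun _ => 0)) ∧
    Set.BijOn (Tmap r)
      {lam : Fin n → ℤ | quotOf (r - 1) lam = mu}
      {lam : Fin n → ℤ | quotOf (r - 1) lam = fun _ => 0} := by
  constructor
  · intro lam _
    refine ⟨?_, fun i => (tmap_vals r hr lam i).1, ?_, tmap_quot r hr lam⟩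
    · intro i
      unfold rho
      rw [tmap_posOf r hr lam i, (tmap_vals r hr lam i).1]
    · intro i
      exact ⟨-(sgn lam i * Ssum (r - 1) lam (posOf lam i + 1)), by unfold Tmap Ssum; ring⟩
  · refine ⟨fun lam _ => tmap_quot r hr lam, fun lam1 h1 lam2 h2 heq => ?_, fun nu hq => ?_⟩
    · calc lam1 = Umap r mu (Tmap r lam1) := (umap_of_quot r hr mu lam1 h1).symm
        _ = Umap r mu (Tmap r lam2) := by rw [heq]
        _ = lam2 := umap_of_quot r hr mu lam2 h2
    · exact ⟨Umap r mu nu, (umap_quot r hr mu nu hmu1 hmu2 hq).1,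
        tmap_umap r hr mu nu hmu1 hmu2 hq⟩

end CCnDAHA
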